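/- Let k, m be real numbers with 0 ≤ k < m, and let f : [0,∞) → [0,1] be a measurable log-concave function with f(0) = 1. Then ( (1/Γ(m+1)) ∫₀^∞ x^m f(x) dx )^{1/(m+1)} ≤ ( (1/Γ(k+1)) ∫₀^∞ x^k f(x) dx )^{1/(k+1)}, both sides taken in [0,∞]. If moreover 0 < ∫₀^∞ x^k f(x) dx < ∞, then equality holds if and only if there exists c > 0 with f(x) = e^{−cx} for all x ≥ 0. -/

import Mathlib

open MeasureTheory ENNReal

noncomputable section

/-- The normalized moment `(1/Γ(p+1)) ∫₀^∞ x^p f(x) dx`, with values in `[0,∞]`. -/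
def momInt (f : ℝ → ℝ) (p : ℝ) : ℝ≥0∞ :=
  (∫⁻ x in Set.Ici (0 : ℝ), ENNReal.ofReal (x ^ p * f x)) /
    ENNReal.ofReal (Real.Gamma (p + 1))

namespace Stmt11Aux

lemma glem {p c : ℝ} (hp : 0 ≤ p) (hc : 0 < c) :
    ∫⁻ x in Set.Ici (0:ℝ), ENNReal.ofReal (x ^ p * Real.exp (-(c * x)))
      = ENNReal.ofReal (Real.Gamma (p+1) / c ^ (p+1)) := by
  have hp1 : (0:ℝ) < p + 1 := by linarith
  have h1 := ProbabilityTheory.lintegral_gammaPDF_eq_one hp1 hc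
  rw [← lintegral_add_compl _ (measurableSet_Ici (a := (0:ℝ))), Set.compl_Ici] at h1
  rw [ProbabilityTheory.lintegral_gammaPDF_of_nonpos le_rfl, add_zero] at h1
  have hK : (0:ℝ) < c ^ (p+1) / Real.Gamma (p+1) := by
    have := Real.Gamma_pos_of_pos hp1
    positivity
  have h2 : ∫⁻ x in Set.Ici (0:ℝ), ProbabilityTheory.gammaPDF (p+1) c x
      = ∫⁻ x in Set.Ici (0:ℝ),
        ENNReal.ofReal (c ^ (p+1) / Real.Gamma (p+1)) * ENNReal.ofReal (x ^ p * Real.exp (-(c * x))) := by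
    refine setLIntegral_congr_fun measurableSet_Ici (fun x hx => ?_)
    rw [ProbabilityTheory.gammaPDF_of_nonneg hx, ← ENNReal.ofReal_mul hK.le]
    ring_nf
  rw [h2, lintegral_const_mul _ (by fun_prop)] at h1
  have hKne : ENNReal.ofReal (c ^ (p+1) / Real.Gamma (p+1)) ≠ 0 := by
    simpa [ENNReal.ofReal_eq_zero, not_le] using hK
  calc ∫⁻ x in Set.Ici (0:ℝ), ENNReal.ofReal (x ^ p * Real.exp (-(c * x)))
      = (ENNReal.ofReal (c ^ (p+1) / Real.Gamma (p+1)))⁻¹ *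
        (ENNReal.ofReal (c ^ (p+1) / Real.Gamma (p+1)) *
          ∫⁻ x in Set.Ici (0:ℝ), ENNReal.ofReal (x ^ p * Real.exp (-(c * x)))) := by
        rw [← mul_assoc, ENNReal.inv_mul_cancel hKne ENNReal.ofReal_ne_top, one_mul]
    _ = _ := by rw [h1, mul_one, ← ENNReal.ofReal_inv_of_pos hK, inv_div]

lemma momPow {c p : ℝ} (hc : 0 < c) (hp1 : 0 < p + 1) :
    (ENNReal.ofReal (Real.Gamma (p+1) / c ^ (p+1)) / ENNReal.ofReal (Real.Gamma (p+1))) ^ (1/(p+1))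
      = ENNReal.ofReal c⁻¹ := by
  have hG := Real.Gamma_pos_of_pos hp1
  rw [← ENNReal.ofReal_div_of_pos hG]
  have h1 : Real.Gamma (p+1) / c ^ (p+1) / Real.Gamma (p+1) = c⁻¹ ^ (p+1) := by
    rw [Real.inv_rpow hc.le]
    field_simp
  rw [h1, ← ENNReal.ofReal_rpow_of_pos (inv_pos.2 hc), ← ENNReal.rpow_mul,
    mul_one_div_cancel hp1.ne', ENNReal.rpow_one]

lemma momPow_le {X : ℝ≥0∞} {c p : ℝ} (hc : 0 < c) (hp1 : 0 < p+1)
    (hX : X ≤ ENNReal.ofReal (Real.Gamma (p+1) / c ^ (p+1))) :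
    (X / ENNReal.ofReal (Real.Gamma (p+1))) ^ (1/(p+1)) ≤ ENNReal.ofReal c⁻¹ := by
  rw [← momPow hc hp1]
  exact ENNReal.rpow_le_rpow (ENNReal.div_le_div_right hX _) (by positivity)

lemma momPow_rev {X : ℝ≥0∞} {c p : ℝ} (hc : 0 < c) (hp1 : 0 < p+1)
    (hX : (X / ENNReal.ofReal (Real.Gamma (p+1))) ^ (1/(p+1)) = ENNReal.ofReal c⁻¹) :
    X = ENNReal.ofReal (Real.Gamma (p+1) / c ^ (p+1)) := by
  have hG := Real.Gamma_pos_of_pos hp1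
  have hGne : ENNReal.ofReal (Real.Gamma (p+1)) ≠ 0 := by
    simpa [ENNReal.ofReal_eq_zero, not_le] using hG
  have h1 : (X / ENNReal.ofReal (Real.Gamma (p+1))) ^ (1/(p+1))
      = (ENNReal.ofReal (Real.Gamma (p+1) / c ^ (p+1)) / ENNReal.ofReal (Real.Gamma (p+1))) ^ (1/(p+1)) := by
    rw [hX, momPow hc hp1]
  have h2 := ENNReal.rpow_left_injective (by positivity : (1:ℝ)/(p+1) ≠ 0) h1
  calc X = X / ENNReal.ofReal (Real.Gamma (p+1)) * ENNReal.ofReal (Real.Gamma (p+1)) :=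
        (ENNReal.div_mul_cancel hGne ENNReal.ofReal_ne_top).symm
    _ = _ := by rw [h2, ENNReal.div_mul_cancel hGne ENNReal.ofReal_ne_top]

section
variable (f : ℝ → ℝ) (hf0 : f 0 = 1)
  (hrange : ∀ x : ℝ, 0 ≤ x → f x ∈ Set.Icc (0 : ℝ) 1)
  (hlc : ∀ x y : ℝ, 0 ≤ x → 0 ≤ y → ∀ l : ℝ, 0 < l → l < 1 →
      f x ^ l * f y ^ (1 - l) ≤ f (l * x + (1 - l) * y))

include hf0 hlc in
lemma Lpow : ∀ x y : ℝ, 0 < x → x < y → f y ^ (x / y) ≤ f x := by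
  intro x y hx hxy
  have hy : (0:ℝ) < y := hx.trans hxy
  have hd0 : 0 < x / y := div_pos hx hy
  have hd1 : x / y < 1 := (div_lt_one hy).2 hxy
  have h := hlc 0 y le_rfl hy.le (1 - x/y) (by linarith) (by linarith)
  have h2 : (1:ℝ) - (1 - x/y) = x / y := by ring
  rw [hf0, Real.one_rpow, one_mul, h2, mul_zero, zero_add] at h
  rwa [div_mul_cancel₀ _ hy.ne'] at h

include hf0 hrange hlc in
lemma Lup : ∀ z x : ℝ, 0 < z → z < x → f x ≤ f z ^ (x / z) := by
  intro z x hz hzx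
  have hx : (0:ℝ) < x := hz.trans hzx
  have h := Lpow f hf0 hlc z x hz hzx
  have hfx : 0 ≤ f x := (hrange x hx.le).1
  calc f x = (f x ^ (z / x)) ^ (x / z) := by
        rw [← Real.rpow_mul hfx, div_mul_div_comm, mul_comm,
          div_self (by positivity), Real.rpow_one]
    _ ≤ f z ^ (x / z) := Real.rpow_le_rpow (Real.rpow_nonneg hfx _) h (by positivity)

include hf0 hlc in
lemma expDown {c : ℝ} : ∀ x y : ℝ, 0 ≤ x → x < y →
    Real.exp (-(c * y)) ≤ f y → Real.exp (-(c * x)) ≤ f x := by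
  intro x y hx hxy hfy
  rcases eq_or_lt_of_le hx with rfl | hx0
  · simp [hf0]
  have hy : (0:ℝ) < y := hx0.trans hxy
  have h1 : Real.exp (-(c*y)) ^ (x/y) ≤ f y ^ (x/y) :=
    Real.rpow_le_rpow (Real.exp_nonneg _) hfy (by positivity)
  have h2 : Real.exp (-(c*y)) ^ (x/y) = Real.exp (-(c*x)) := by
    rw [← Real.exp_mul]
    congr 1
    field_simp
  exact le_trans (h2 ▸ h1) (Lpow f hf0 hlc x y hx0 hxy)

include hf0 hrange hlc in
lemma expUp {c : ℝ} : ∀ z x : ℝ, 0 < z → z < x →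
    f z ≤ Real.exp (-(c * z)) → f x ≤ Real.exp (-(c * x)) := by
  intro z x hz hzx hfz
  have hx : (0:ℝ) < x := hz.trans hzx
  have h1 : f z ^ (x/z) ≤ Real.exp (-(c*z)) ^ (x/z) :=
    Real.rpow_le_rpow (hrange z hz.le).1 hfz (by positivity)
  have h2 : Real.exp (-(c*z)) ^ (x/z) = Real.exp (-(c*x)) := by
    rw [← Real.exp_mul]; congr 1; field_simp
  exact le_trans (Lup f hf0 hrange hlc z x hz hzx) (h2 ▸ h1)

include hf0 hrange hlc in
lemma everywhere_exp {c : ℝ} (N : Set ℝ) (hN : volume N = 0)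
    (hae : ∀ x, 0 < x → x ∉ N → f x = Real.exp (-(c * x))) :
    ∀ x, 0 ≤ x → f x = Real.exp (-(c * x)) := by
  have key : ∀ a b : ℝ, 0 < a → a < b → ∃ y, a < y ∧ y < b ∧ y ∉ N := by
    intro a b ha hab
    by_contra hcon
    push_neg at hcon
    have hsub : Set.Ioo a b ⊆ N := fun y hy => hcon y hy.1 hy.2
    have h0 := measure_mono_null hsub hN
    rw [Real.volume_Ioo, ENNReal.ofReal_eq_zero] at h0
    linarith
  intro x hx
  rcases eq_or_lt_of_le hx with rfl | hx0
  · simp [hf0]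
  obtain ⟨y, hxy, _, hyN⟩ := key x (x+1) hx0 (by linarith)
  obtain ⟨z, hz1, hz2, hzN⟩ := key (x/2) x (by linarith) (by linarith)
  have hy := hae y (by linarith) hyN
  have hz := hae z (by linarith) hzN
  have h1 : Real.exp (-(c*x)) ≤ f x :=
    expDown f hf0 hlc x y hx0.le hxy (le_of_eq hy.symm)
  have h2 : f x ≤ Real.exp (-(c*x)) :=
    expUp f hf0 hrange hlc z x (by linarith) hz2 (le_of_eq hz)
  exact le_antisymm h2 h1

end

lemma momExp (f : ℝ → ℝ) {c p : ℝ} (hc : 0 < c) (hp : 0 ≤ p)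
    (hfe : ∀ x, 0 ≤ x → f x = Real.exp (-(c * x))) :
    momInt f p ^ (1/(p+1)) = ENNReal.ofReal c⁻¹ := by
  have h1 : ∫⁻ x in Set.Ici (0:ℝ), ENNReal.ofReal (x ^ p * f x)
      = ENNReal.ofReal (Real.Gamma (p+1) / c ^ (p+1)) := by
    rw [setLIntegral_congr_fun measurableSet_Ici
      (fun x (hx : (0:ℝ) ≤ x) => by rw [hfe x hx])]
    exact glem hp hc
  rw [momInt, h1]
  exact momPow hc (by linarith)

lemma lint_ae_eq {h₁ h₂ : ℝ → ℝ≥0∞} {μ : Measure ℝ} (m1 : Measurable h₁) (m2 : Measurable h₂)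
    (hle : ∀ᵐ x ∂μ, h₁ x ≤ h₂ x) (hfin : ∫⁻ x, h₁ x ∂μ ≠ ⊤)
    (heq : ∫⁻ x, h₁ x ∂μ = ∫⁻ x, h₂ x ∂μ) : ∀ᵐ x ∂μ, h₁ x = h₂ x := by
  have hsub := lintegral_sub m1 hfin hle
  rw [← heq, tsub_self] at hsub
  have h0 := (lintegral_eq_zero_iff (m2.sub m1)).1 hsub
  filter_upwards [h0, hle] with x h1x h2x
  have h3 : h₂ x - h₁ x = 0 := h1x
  exact le_antisymm h2x (tsub_eq_zero_iff_le.1 h3)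

end Stmt11Aux

open Stmt11Aux

theorem stmt11 (k m : ℝ) (hk : 0 ≤ k) (hkm : k < m)
    (f : ℝ → ℝ) (hmeas : Measurable f)
    (hrange : ∀ x : ℝ, 0 ≤ x → f x ∈ Set.Icc (0 : ℝ) 1)
    (hf0 : f 0 = 1)
    (hlc : ∀ x y : ℝ, 0 ≤ x → 0 ≤ y → ∀ l : ℝ, 0 < l → l < 1 →
      f x ^ l * f y ^ (1 - l) ≤ f (l * x + (1 - l) * y)) :
    momInt f m ^ (1 / (m + 1)) ≤ momInt f k ^ (1 / (k + 1)) ∧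
    (0 < (∫⁻ x in Set.Ici (0 : ℝ), ENNReal.ofReal (x ^ k * f x)) →
      (∫⁻ x in Set.Ici (0 : ℝ), ENNReal.ofReal (x ^ k * f x)) < ∞ →
      (momInt f m ^ (1 / (m + 1)) = momInt f k ^ (1 / (k + 1)) ↔
        ∃ c : ℝ, 0 < c ∧ ∀ x : ℝ, 0 ≤ x → f x = Real.exp (-c * x))) := by
  have hm : 0 < m := lt_of_le_of_lt hk hkm
  have hm1 : (0:ℝ) < m + 1 := by linarith
  have hk1 : (0:ℝ) < k + 1 := by linarith
  have hGk : 0 < Real.Gamma (k+1) := Real.Gamma_pos_of_pos hk1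
  have hGm : 0 < Real.Gamma (m+1) := Real.Gamma_pos_of_pos hm1
  set Ik := ∫⁻ x in Set.Ici (0:ℝ), ENNReal.ofReal (x ^ k * f x) with hIkdef
  set Im := ∫⁻ x in Set.Ici (0:ℝ), ENNReal.ofReal (x ^ m * f x) with hImdef
  have hmomk : momInt f k = Ik / ENNReal.ofReal (Real.Gamma (k+1)) := rfl
  have hmomm : momInt f m = Im / ENNReal.ofReal (Real.Gamma (m+1)) := rfl
  -- trivial case: Ik = 0
  rcases eq_or_ne Ik 0 with h0 | hne0
  · have hfz := (lintegral_eq_zero_iff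
      (μ := volume.restrict (Set.Ici (0:ℝ)))
      (f := fun x => ENNReal.ofReal (x ^ k * f x)) (by fun_prop)).1 h0
    rw [Filter.EventuallyEq, ae_restrict_iff' measurableSet_Ici] at hfz
    have hmz : Im = 0 := by
      rw [hImdef, lintegral_eq_zero_iff (by fun_prop), Filter.EventuallyEq,
        ae_restrict_iff' measurableSet_Ici]
      filter_upwards [hfz] with x hx hx0
      have hkz : ENNReal.ofReal (x ^ k * f x) = 0 := hx hx0
      simp only [Pi.zero_apply]
      rcases eq_or_lt_of_le (Set.mem_Ici.1 hx0) with rfl | hxpos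
      · simp [Real.zero_rpow hm.ne']
      · have h1 : x ^ k * f x ≤ 0 := by
          simpa [ENNReal.ofReal_eq_zero] using hkz
        have h2 : 0 ≤ x ^ k * f x :=
          mul_nonneg (Real.rpow_nonneg hxpos.le _) (hrange x hx0).1
        have h4 : x ^ k * f x = 0 := le_antisymm h1 h2
        rcases mul_eq_zero.1 h4 with h5 | h5
        · exact absurd h5 (Real.rpow_pos_of_pos hxpos _).ne'
        · simp [h5]
    constructor
    · rw [hmomm, hmz, ENNReal.zero_div, ENNReal.zero_rpow_of_pos (by positivity)]
      exact zero_le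
    · intro hpos
      rw [h0] at hpos
      exact absurd hpos (lt_irrefl _)
  -- trivial case: Ik = ⊤
  rcases eq_or_ne Ik ⊤ with htop | hnetop
  · constructor
    · rw [hmomk, htop, ENNReal.top_div_of_ne_top ENNReal.ofReal_ne_top,
        ENNReal.top_rpow_of_pos (by positivity)]
      exact le_top
    · intro _ hlt
      rw [htop] at hlt
      exact absurd hlt (lt_irrefl _)
  -- main case
  have hApos : 0 < Ik.toReal := ENNReal.toReal_pos hne0 hnetop
  set A := Ik.toReal with hAdef
  set c := (Real.Gamma (k+1) / A) ^ (1/(k+1)) with hcdef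
  have hcpos : 0 < c := Real.rpow_pos_of_pos (by positivity) _
  have hck : c ^ (k+1) = Real.Gamma (k+1) / A := by
    rw [hcdef, ← Real.rpow_mul (by positivity), one_div, inv_mul_cancel₀ hk1.ne',
      Real.rpow_one]
  have hA : A = Real.Gamma (k+1) / c ^ (k+1) := by
    rw [hck]
    field_simp
  have hIkA : Ik = ENNReal.ofReal (Real.Gamma (k+1) / c ^ (k+1)) := by
    rw [← hA, hAdef, ENNReal.ofReal_toReal hnetop]
  have hGkint : ∫⁻ x in Set.Ici (0:ℝ), ENNReal.ofReal (x ^ k * Real.exp (-(c * x)))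
      = ENNReal.ofReal (Real.Gamma (k+1) / c ^ (k+1)) := glem hk hcpos
  have hGmint : ∫⁻ x in Set.Ici (0:ℝ), ENNReal.ofReal (x ^ m * Real.exp (-(c * x)))
      = ENNReal.ofReal (Real.Gamma (m+1) / c ^ (m+1)) := glem hm.le hcpos
  have hMomK : momInt f k ^ (1/(k+1)) = ENNReal.ofReal c⁻¹ := by
    rw [hmomk, hIkA]
    exact momPow hcpos hk1
  -- the crossing set
  set S : Set ℝ := {x : ℝ | 0 ≤ x ∧ Real.exp (-(c * x)) ≤ f x} with hSdef
  have hS0 : (0:ℝ) ∈ S := ⟨le_refl 0, by simp [hf0]⟩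
  by_cases hbdd : BddAbove S
  case neg =>
    -- f ≥ exp(-cx) everywhere; in fact f = exp(-cx) everywhere
    have hge : ∀ x : ℝ, 0 ≤ x → Real.exp (-(c*x)) ≤ f x := by
      intro x hx
      obtain ⟨y, hyS, hxy⟩ := not_bddAbove_iff.1 hbdd x
      exact expDown f hf0 hlc x y hx hxy hyS.2
    have hle : ∀ᵐ x ∂(volume.restrict (Set.Ici (0:ℝ))),
        ENNReal.ofReal (x^k * Real.exp (-(c*x))) ≤ ENNReal.ofReal (x^k * f x) := by
      rw [ae_restrict_iff' measurableSet_Ici]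
      exact ae_of_all _ fun x hx => ENNReal.ofReal_le_ofReal
        (mul_le_mul_of_nonneg_left (hge x hx) (Real.rpow_nonneg hx _))
    have heq2 : (∫⁻ x in Set.Ici (0:ℝ), ENNReal.ofReal (x^k * Real.exp (-(c*x))))
        = ∫⁻ x in Set.Ici (0:ℝ), ENNReal.ofReal (x^k * f x) := by
      rw [hGkint, ← hIkdef, hIkA]
    have haeq := lint_ae_eq (by fun_prop) (by fun_prop) hle
      (by rw [hGkint]; exact ENNReal.ofReal_ne_top) heq2
    rw [ae_restrict_iff' measurableSet_Ici] at haeq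
    set N : Set ℝ := {x : ℝ | ¬ (x ∈ Set.Ici (0:ℝ) →
      ENNReal.ofReal (x ^ k * Real.exp (-(c * x))) = ENNReal.ofReal (x ^ k * f x))} with hNdef
    have hNnull : volume N = 0 := haeq
    have hptw : ∀ x, 0 < x → x ∉ N → f x = Real.exp (-(c*x)) := by
      intro x hx hxN
      simp only [hNdef, Set.mem_setOf_eq, not_not] at hxN
      have h3 := hxN (le_of_lt hx)
      have hfxnn : 0 ≤ f x := (hrange x hx.le).1
      rw [ENNReal.ofReal_eq_ofReal_iff (by positivity)
        (mul_nonneg (Real.rpow_nonneg hx.le _) hfxnn)] at h3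
      have hxk : (0:ℝ) < x ^ k := Real.rpow_pos_of_pos hx _
      exact (mul_left_cancel₀ hxk.ne' h3).symm
    have hfeq := everywhere_exp f hf0 hrange hlc N hNnull hptw
    have h1 := momExp f hcpos hk hfeq
    have h2 := momExp f hcpos hm.le hfeq
    constructor
    · rw [h1, h2]
    · intro _ _
      constructor
      · intro _
        exact ⟨c, hcpos, fun x hx => by rw [neg_mul]; exact hfeq x hx⟩
      · intro _
        rw [h1, h2]
  case pos =>
    set x₀ := sSup S with hx0def
    have hSne : S.Nonempty := ⟨0, hS0⟩
    have hx₀0 : 0 ≤ x₀ := le_csSup hbdd hS0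
    have hbelow : ∀ x, 0 ≤ x → x < x₀ → Real.exp (-(c*x)) ≤ f x := by
      intro x hx hxlt
      obtain ⟨y, hyS, hxy⟩ := exists_lt_of_lt_csSup hSne hxlt
      exact expDown f hf0 hlc x y hx hxy hyS.2
    have habove : ∀ x, x₀ < x → f x ≤ Real.exp (-(c*x)) := by
      intro x hxgt
      by_contra hcon
      push_neg at hcon
      exact absurd (le_csSup hbdd ⟨le_trans hx₀0 hxgt.le, hcon.le⟩) (not_le.2 hxgt)
    set T := x₀ ^ (m - k) with hTdef
    have hT0 : 0 ≤ T := Real.rpow_nonneg hx₀0 _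
    have Pq : ∀ x : ℝ, 0 ≤ x →
        x^m * f x + T * (x^k * Real.exp (-(c*x)))
          ≤ x^m * Real.exp (-(c*x)) + T * (x^k * f x) := by
      intro x hx
      rcases eq_or_lt_of_le hx with rfl | hx0
      · rw [Real.zero_rpow hm.ne', hf0]
        simp
      · have hxm : x ^ m = x ^ k * x ^ (m-k) := by
          rw [← Real.rpow_add hx0]
          ring_nf
        have hxk : (0:ℝ) < x ^ k := Real.rpow_pos_of_pos hx0 _
        rcases lt_trichotomy x x₀ with hlt | heq | hgt
        · have hfg := hbelow x hx hlt
          have hbT : x ^ (m-k) ≤ T := by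
            rw [hTdef]
            exact Real.rpow_le_rpow hx hlt.le (by linarith)
          rw [hxm]
          nlinarith [mul_nonneg (mul_nonneg hxk.le (sub_nonneg.2 hfg)) (sub_nonneg.2 hbT)]
        · have hTx : T = x ^ (m-k) := by rw [hTdef, ← heq]
          rw [hxm, hTx]
          apply le_of_eq
          ring
        · have hfg := habove x hgt
          have hbT : T ≤ x ^ (m-k) := by
            rw [hTdef]
            exact Real.rpow_le_rpow hx₀0 hgt.le (by linarith)
          rw [hxm]
          nlinarith [mul_nonneg (mul_nonneg hxk.le (sub_nonneg.2 hfg)) (sub_nonneg.2 hbT)]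
    have key : ∀ᵐ x ∂(volume.restrict (Set.Ici (0:ℝ))),
        ENNReal.ofReal (x^m * f x + T * (x^k * Real.exp (-(c*x))))
          ≤ ENNReal.ofReal (x^m * Real.exp (-(c*x)) + T * (x^k * f x)) := by
      rw [ae_restrict_iff' measurableSet_Ici]
      exact ae_of_all _ fun x hx => ENNReal.ofReal_le_ofReal (Pq x hx)
    have hsum1 : (∫⁻ x in Set.Ici (0:ℝ),
        ENNReal.ofReal (x^m * f x + T * (x^k * Real.exp (-(c*x)))))
        = Im + ENNReal.ofReal T * ENNReal.ofReal (Real.Gamma (k+1) / c ^ (k+1)) := by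
      rw [setLIntegral_congr_fun measurableSet_Ici (fun x (hx : (0:ℝ) ≤ x) => by
        rw [ENNReal.ofReal_add (mul_nonneg (Real.rpow_nonneg hx _) (hrange x hx).1)
          (by positivity), ENNReal.ofReal_mul hT0])]
      rw [lintegral_add_left (by fun_prop), lintegral_const_mul _ (by fun_prop),
        hGkint, ← hImdef]
    have hsum2 : (∫⁻ x in Set.Ici (0:ℝ),
        ENNReal.ofReal (x^m * Real.exp (-(c*x)) + T * (x^k * f x)))
        = ENNReal.ofReal (Real.Gamma (m+1) / c ^ (m+1)) + ENNReal.ofReal T * Ik := by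
      rw [setLIntegral_congr_fun measurableSet_Ici (fun x (hx : (0:ℝ) ≤ x) => by
        rw [ENNReal.ofReal_add (by positivity)
          (mul_nonneg hT0 (mul_nonneg (Real.rpow_nonneg hx _) (hrange x hx).1)),
          ENNReal.ofReal_mul hT0])]
      rw [lintegral_add_left (by fun_prop), lintegral_const_mul _ (by fun_prop),
        hGmint, ← hIkdef]
    have hchain : Im + ENNReal.ofReal T * ENNReal.ofReal (Real.Gamma (k+1) / c ^ (k+1))
        ≤ ENNReal.ofReal (Real.Gamma (m+1) / c ^ (m+1)) + ENNReal.ofReal T * Ik := by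
      rw [← hsum1, ← hsum2]
      exact lintegral_mono_ae key
    rw [hIkA] at hchain
    have hImGm : Im ≤ ENNReal.ofReal (Real.Gamma (m+1) / c ^ (m+1)) :=
      (ENNReal.add_le_add_iff_right
        (ENNReal.mul_ne_top ENNReal.ofReal_ne_top ENNReal.ofReal_ne_top)).1 hchain
    have hineq : momInt f m ^ (1/(m+1)) ≤ ENNReal.ofReal c⁻¹ := by
      rw [hmomm]
      exact momPow_le hcpos hm1 hImGm
    refine ⟨by rw [hMomK]; exact hineq, fun _ _ => ?_⟩
    constructor
    · intro hEqm
      have hImEq : Im = ENNReal.ofReal (Real.Gamma (m+1) / c ^ (m+1)) := by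
        refine momPow_rev hcpos hm1 ?_
        rw [← hmomm]
        exact hEqm.trans hMomK
      have heqint : (∫⁻ x in Set.Ici (0:ℝ),
          ENNReal.ofReal (x^m * f x + T * (x^k * Real.exp (-(c*x)))))
          = ∫⁻ x in Set.Ici (0:ℝ),
            ENNReal.ofReal (x^m * Real.exp (-(c*x)) + T * (x^k * f x)) := by
        rw [hsum1, hsum2, hImEq, hIkA]
      have hfin1 : (∫⁻ x in Set.Ici (0:ℝ),
          ENNReal.ofReal (x^m * f x + T * (x^k * Real.exp (-(c*x))))) ≠ ⊤ := by
        rw [hsum1, hImEq]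
        exact ENNReal.add_ne_top.2 ⟨ENNReal.ofReal_ne_top,
          ENNReal.mul_ne_top ENNReal.ofReal_ne_top ENNReal.ofReal_ne_top⟩
      have haeq := lint_ae_eq (by fun_prop) (by fun_prop) key hfin1 heqint
      rw [ae_restrict_iff' measurableSet_Ici] at haeq
      set N : Set ℝ := {x : ℝ | ¬ (x ∈ Set.Ici (0:ℝ) →
        ENNReal.ofReal (x^m * f x + T * (x^k * Real.exp (-(c*x))))
          = ENNReal.ofReal (x^m * Real.exp (-(c*x)) + T * (x^k * f x)))} ∪ {x₀} with hNdef
      have hNnull : volume N = 0 := measure_union_null haeq Real.volume_singleton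
      have hptw : ∀ x, 0 < x → x ∉ N → f x = Real.exp (-(c*x)) := by
        intro x hx hxN
        simp only [hNdef, Set.mem_union, Set.mem_singleton_iff, Set.mem_setOf_eq,
          not_or, not_not] at hxN
        obtain ⟨hP, hxne⟩ := hxN
        have h3 := hP (le_of_lt hx)
        have hfxnn : 0 ≤ f x := (hrange x hx.le).1
        rw [ENNReal.ofReal_eq_ofReal_iff
          (by positivity) (by positivity)] at h3
        have hxm : x ^ m = x ^ k * x ^ (m-k) := by
          rw [← Real.rpow_add hx]
          ring_nf
        have hxk : (0:ℝ) < x ^ k := Real.rpow_pos_of_pos hx _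
        have hbne : x ^ (m-k) ≠ T := by
          rcases lt_or_gt_of_ne hxne with hlt | hgt
          · rw [hTdef]
            exact ne_of_lt (Real.rpow_lt_rpow hx.le hlt (by linarith))
          · rw [hTdef]
            exact (ne_of_lt (Real.rpow_lt_rpow hx₀0 hgt (by linarith))).symm
        have hzero : (x ^ (m-k) - T) * (x ^ k * (f x - Real.exp (-(c*x)))) = 0 := by
          rw [hxm] at h3
          linear_combination h3
        rcases mul_eq_zero.1 hzero with h | h
        · exact absurd (sub_eq_zero.1 h) hbne
        · rcases mul_eq_zero.1 h with h' | h'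
          · exact absurd h' hxk.ne'
          · exact sub_eq_zero.1 h'
      have hfeq := everywhere_exp f hf0 hrange hlc N hNnull hptw
      exact ⟨c, hcpos, fun x hx => by rw [neg_mul]; exact hfeq x hx⟩
    · rintro ⟨c', hc', hfe'⟩
      have hfe'' : ∀ x, 0 ≤ x → f x = Real.exp (-(c' * x)) := fun x hx => by
        rw [← neg_mul]; exact hfe' x hx
      rw [momExp f hc' hk hfe'', momExp f hc' hm.le hfe'']

end
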